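/- For any n ≥ 2 and 0 < k < n, the sequence up(Γ_{n,k}), consisting of the vertices up(x, s(x)) at level k+1 for each upward vertex x of Γ_{n,k} in the order induced by Γ_{n,k}, is a subsequence of Γ_{n,k+1}; in particular all its vertices are distinct. -/

import Mathlib

/-- The reflected Gray code `Γ_n`. -/
def gray : ℕ → List (List Bool)
  | 0 => [[]]
  | n + 1 => (gray n).map (fun x => x ++ [false]) ++ ((gray n).reverse.map (fun x => x ++ [true]))

/-- `Γ_{n,k}`: the subsequence of `Γ_n` consisting of the bitstrings of weight `k`. -/
def grayLevel (n k : ℕ) : List (List Bool) := (gray n).filter (fun x => x.count true = k)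

/-- `x` is an upward vertex of `Γ_n`: its cyclic successor in `Γ_n` has weight one more. -/
def IsUpward (n : ℕ) (x : List Bool) : Prop :=
  ∃ p : Fin (gray n).length, (gray n).get p = x ∧
    ((gray n).get ⟨((p : ℕ) + 1) % (gray n).length, Nat.mod_lt _ p.pos⟩).count true
      = x.count true + 1

instance (n : ℕ) (x : List Bool) : Decidable (IsUpward n x) := by
  unfold IsUpward; infer_instance

/-- The sequence `up(Γ_{n,k})`: for each upward vertex `x` of `Γ_{n,k}` in order, the
common upper neighbor `up(x, s(x))` (the bitwise OR of `x` and its cyclic successor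
`s(x)` in `Γ_{n,k}`). -/
def upSeq (n k : ℕ) : List (List Bool) :=
  (List.finRange (grayLevel n k).length).filterMap (fun a =>
    if IsUpward n ((grayLevel n k).get a) then
      some (List.zipWith (· || ·) ((grayLevel n k).get a)
        ((grayLevel n k).get ⟨((a : ℕ) + 1) % (grayLevel n k).length, Nat.mod_lt _ a.pos⟩))
    else none)


def wt (x : List Bool) : ℕ := x.count true
def g (n i : ℕ) : List Bool := (gray n).getD i []

lemma gray_length (n : ℕ) : (gray n).length = 2 ^ n := by
  induction n with
  | zero => rfl
  | succ n ih => simp [gray, ih, pow_succ]; ring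

lemma length_of_mem_gray {n : ℕ} {x : List Bool} (h : x ∈ gray n) : x.length = n := by
  induction n generalizing x with
  | zero => simp [gray] at h; simp [h]
  | succ n ih =>
    simp only [gray, List.mem_append, List.mem_map, List.mem_reverse] at h
    rcases h with ⟨y, hy, rfl⟩ | ⟨y, hy, rfl⟩ <;> simp [ih hy]

lemma gray_nodup (n : ℕ) : (gray n).Nodup := by
  induction n with
  | zero => simp [gray]
  | succ n ih =>
    rw [gray]
    apply List.Nodup.append
    · exact ih.map (fun a b h => by simpa using h)
    · exact (List.nodup_reverse.mpr ih).map (fun a b h => by simpa using h)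
    · intro x hx hy
      simp only [List.mem_map, List.mem_reverse] at hx hy
      rcases hx with ⟨y, _, rfl⟩
      rcases hy with ⟨z, _, h⟩
      have := congrArg (fun l => l.getLast?) h
      simp at this

lemma g_zero (n : ℕ) : g n 0 = List.replicate n false := by
  induction n with
  | zero => rfl
  | succ n ih =>
    have h0 : 0 < (gray n).length := by rw [gray_length]; positivity
    obtain ⟨y, L, hy⟩ : ∃ y L, gray n = y :: L := by
      cases hg : gray n with
      | nil => rw [hg] at h0; simp at h0
      | cons a l => exact ⟨a, l, rfl⟩
    have : g n 0 = y := by rw [g, hy]; rfl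
    rw [g, gray, hy, List.replicate_succ']
    simp only [List.map_cons, List.cons_append, List.getD_cons_zero]
    rw [← this, ih]

lemma gA {n i : ℕ} (h : i < 2 ^ n) : g (n + 1) i = g n i ++ [false] := by
  rw [g, g, gray, List.getD_append _ _ _ _ (by simpa [gray_length] using h)]
  rw [List.getD_eq_getElem _ _ (by simpa [gray_length] using h),
    List.getD_eq_getElem _ _ (by simpa [gray_length] using h)]
  simp

lemma gB {n q : ℕ} (h : q < 2 ^ n) : g (n + 1) (2 ^ n + q) = g n (2 ^ n - 1 - q) ++ [true] := by
  have hlen : (gray n).length = 2 ^ n := gray_length n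
  have h1 : ((gray n).map (fun x => x ++ [false])).length = 2 ^ n := by simp [hlen]
  rw [g, g, gray, List.getD_append_right _ _ _ _ (by omega)]
  rw [h1]
  have h2 : 2 ^ n + q - 2 ^ n = q := by omega
  rw [h2, List.getD_eq_getElem _ _ (by simpa [hlen] using h),
    List.getD_eq_getElem _ _ (by rw [hlen]; omega)]
  simp only [List.getElem_map, List.getElem_reverse]
  congr 2
  simp only [hlen]

lemma wt_append_false (x : List Bool) : wt (x ++ [false]) = wt x := by
  simp [wt, List.count_append]

lemma wt_append_true (x : List Bool) : wt (x ++ [true]) = wt x + 1 := by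
  simp [wt, List.count_append]

lemma g_mem {n i : ℕ} (h : i < 2 ^ n) : g n i ∈ gray n := by
  rw [g, List.getD_eq_getElem _ _ (by simpa [gray_length] using h)]
  exact List.getElem_mem _

lemma g_length {n i : ℕ} (h : i < 2 ^ n) : (g n i).length = n :=
  length_of_mem_gray (g_mem h)

lemma g_inj {n i j : ℕ} (hi : i < 2 ^ n) (hj : j < 2 ^ n) (h : g n i = g n j) : i = j := by
  rw [g, g, List.getD_eq_getElem _ _ (by simpa [gray_length] using hi),
    List.getD_eq_getElem _ _ (by simpa [gray_length] using hj)] at h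
  exact ((gray_nodup n).getElem_inj_iff).mp h

lemma wt_eq_zero {n i : ℕ} (hi : i < 2 ^ n) (h : wt (g n i) = 0) : i = 0 := by
  apply g_inj hi (by positivity)
  rw [g_zero]
  have hl := g_length hi
  rw [wt, List.count_eq_zero] at h
  have hall : ∀ b ∈ g n i, b = false := by
    intro b hb
    cases b
    · rfl
    · exact absurd hb h
  exact List.eq_replicate_iff.mpr ⟨hl, hall⟩

lemma wt_g_last (n : ℕ) : wt (g (n + 1) (2 ^ (n + 1) - 1)) = 1 := by
  have h : 2 ^ (n + 1) - 1 = 2 ^ n + (2 ^ n - 1) := by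
    have : 1 ≤ 2 ^ n := Nat.one_le_two_pow
    omega
  rw [h, gB (by have : 1 ≤ 2 ^ n := Nat.one_le_two_pow; omega)]
  have : 2 ^ n - 1 - (2 ^ n - 1) = 0 := by omega
  rw [this, g_zero, wt_append_true, wt]
  simp [List.count_replicate]

lemma or_append {x y : List Bool} (b c : Bool) (h : x.length = y.length) :
    List.zipWith (· || ·) (x ++ [b]) (y ++ [c]) = List.zipWith (· || ·) x y ++ [b || c] := by
  rw [List.zipWith_append h]
  rfl

lemma or_false_right (x : List Bool) : List.zipWith (· || ·) x (List.replicate x.length false) = x := by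
  induction x with
  | nil => rfl
  | cons a l ih => simp [List.replicate_succ, ih]

lemma or_comm' (x y : List Bool) :
    List.zipWith (· || ·) x y = List.zipWith (· || ·) y x :=
  List.zipWith_comm_of_comm Bool.or_comm

lemma boundary {n : ℕ} (hn : 1 ≤ n) :
    wt (g (n + 1) (2 ^ n - 1)) = 1 ∧ wt (g (n + 1) (2 ^ (n + 1) - 1)) = 1 ∧
    wt (g (n + 1) (2 ^ n)) = 2 ∧
    g (n + 1) (2 ^ n) =
      List.zipWith (· || ·) (g (n + 1) (2 ^ n - 1)) (g (n + 1) (2 ^ (n + 1) - 1)) ∧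
    (∀ r, 2 ^ n - 1 < r → r < 2 ^ (n + 1) - 1 → wt (g (n + 1) r) ≠ 1) := by
  have hp : 0 < 2 ^ n := Nat.pow_pos (by norm_num)
  have hp2 : 2 ^ (n + 1) = 2 * 2 ^ n := by rw [pow_succ]; ring
  have e1 : g (n + 1) (2 ^ n - 1) = g n (2 ^ n - 1) ++ [false] := gA (by omega)
  have e2 : g (n + 1) (2 ^ (n + 1) - 1) = List.replicate n false ++ [true] := by
    have : 2 ^ (n + 1) - 1 = 2 ^ n + (2 ^ n - 1) := by omega
    rw [this, gB (by omega)]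
    have : 2 ^ n - 1 - (2 ^ n - 1) = 0 := by omega
    rw [this, g_zero]
  have e3 : g (n + 1) (2 ^ n) = g n (2 ^ n - 1) ++ [true] := by
    have : (2^n : ℕ) = 2 ^ n + 0 := by omega
    rw [this, gB (by omega)]
    simp
  have hw1 : wt (g n (2 ^ n - 1)) = 1 := by
    obtain ⟨m, rfl⟩ : ∃ m, n = m + 1 := ⟨n - 1, by omega⟩
    exact wt_g_last m
  refine ⟨by rw [e1, wt_append_false, hw1], ?_, by rw [e3, wt_append_true, hw1], ?_, ?_⟩
  · rw [e2, wt_append_true, wt]; simp [List.count_replicate]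
  · rw [e1, e2, e3, or_append _ _ (by rw [g_length (by omega)]; simp)]
    have h2 := or_false_right (g n (2 ^ n - 1))
    rw [g_length (show 2 ^ n - 1 < 2 ^ n from by omega)] at h2
    rw [h2]
    simp
  · intro r hr1 hr2
    have hq : r = 2 ^ n + (r - 2 ^ n) := by omega
    rw [hq, gB (by omega), wt_append_true]
    intro hcon
    have h0 : wt (g n (2 ^ n - 1 - (r - 2 ^ n))) = 0 := by omega
    have := wt_eq_zero (n := n) (by omega) h0
    omega

def UpP (n k : ℕ) : Prop := ∀ i, i + 1 < 2 ^ n → wt (g n i) = k → wt (g n (i + 1)) = k + 1 →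
  ∃ j m, i < m ∧ m < j ∧ j < 2 ^ n ∧ wt (g n j) = k ∧
    (∀ r, i < r → r < j → wt (g n r) ≠ k) ∧
    g n m = List.zipWith (· || ·) (g n i) (g n j) ∧ wt (g n m) = k + 1

def DownP (n k : ℕ) : Prop := ∀ p, 1 ≤ p → p < 2 ^ n → wt (g n p) = k → wt (g n (p - 1)) = k + 1 →
  ∃ p' m, p' < m ∧ m < p ∧ wt (g n p') = k ∧
    (∀ r, p' < r → r < p → wt (g n r) ≠ k) ∧
    g n m = List.zipWith (· || ·) (g n p') (g n p) ∧ wt (g n m) = k + 1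

theorem updown (n : ℕ) : ∀ k, 1 ≤ k → UpP n k ∧ DownP n k := by
  induction n with
  | zero =>
    intro k hk
    constructor
    · intro i hi; omega
    · intro p hp1 hp2; omega
  | succ n ih =>
    intro k hk
    have hp : 0 < 2 ^ n := Nat.pow_pos (by norm_num)
    have hp2 : 2 ^ (n + 1) = 2 * 2 ^ n := by rw [pow_succ]; ring
    constructor
    · -- UpP (n+1) k
      intro i hi1 hwi hwi1
      rcases lt_trichotomy (i + 1) (2 ^ n) with hA | hA | hA
      · -- interior first half
        rw [gA (by omega), wt_append_false] at hwi
        rw [gA hA, wt_append_false] at hwi1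
        obtain ⟨j, m, h1, h2, h3, h4, h5, h6, h7⟩ := (ih k hk).1 i hA hwi hwi1
        refine ⟨j, m, h1, h2, by omega, ?_, ?_, ?_, ?_⟩
        · rw [gA h3, wt_append_false]; exact h4
        · intro r hr1 hr2
          rw [gA (by omega), wt_append_false]; exact h5 r hr1 hr2
        · rw [gA (by omega), gA (by omega), gA h3, h6,
            or_append _ _ (by rw [g_length (by omega), g_length h3])]
          simp
        · rw [gA (by omega), wt_append_false]; exact h7
      · -- boundary i = 2^n - 1
        have hi : i = 2 ^ n - 1 := by omega
        subst hi
        rcases Nat.eq_zero_or_pos n with rfl | hn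
        · exfalso
          rw [gA (by omega), wt_append_false] at hwi
          rw [show (2:ℕ) ^ 0 - 1 = 0 from rfl, g_zero] at hwi
          simp [wt] at hwi
          omega
        · have h2n : 2 ≤ 2 ^ n := Nat.one_lt_two_pow_iff.mpr (by omega)
          obtain ⟨b1, b2, b3, b4, b5⟩ := boundary hn
          have hk1 : k = 1 := by
            rw [gA (by omega), wt_append_false] at hwi
            have := b1
            rw [gA (by omega), wt_append_false] at this
            omega
          subst hk1
          exact ⟨2 ^ (n + 1) - 1, 2 ^ n, by omega, by omega, by omega, b2, b5, b4, b3⟩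
      · -- second half
        obtain ⟨q, rfl⟩ : ∃ q, i = 2 ^ n + q := ⟨i - 2 ^ n, by omega⟩
        have hq1 : q + 1 < 2 ^ n := by omega
        rw [gB (by omega), wt_append_true] at hwi
        rw [show (2:ℕ) ^ n + q + 1 = 2 ^ n + (q + 1) from by omega, gB hq1,
          wt_append_true] at hwi1
        rw [show (2:ℕ) ^ n - 1 - (q + 1) = 2 ^ n - 1 - q - 1 from by omega] at hwi1
        have hk2 : 2 ≤ k := by
          rcases Nat.lt_or_ge k 2 with h | h
          · exfalso
            have h0 : wt (g n (2 ^ n - 1 - q)) = 0 := by omega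
            have := wt_eq_zero (n := n) (by omega) h0
            omega
          · exact h
        obtain ⟨p', m, h1, h2, h3, h4, h5, h6⟩ :=
          (ih (k - 1) (by omega)).2 (2 ^ n - 1 - q) (by omega) (by omega) (by omega) (by omega)
        refine ⟨2 ^ n + (2 ^ n - 1 - p'), 2 ^ n + (2 ^ n - 1 - m), by omega, by omega, by omega,
          ?_, ?_, ?_, ?_⟩
        · rw [gB (show 2 ^ n - 1 - p' < 2 ^ n from by omega), wt_append_true,
            show (2:ℕ) ^ n - 1 - (2 ^ n - 1 - p') = p' from by omega]
          omega
        · intro r hr1 hr2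
          rw [show r = 2 ^ n + (r - 2 ^ n) from by omega,
            gB (show r - 2 ^ n < 2 ^ n from by omega), wt_append_true]
          have hmem : p' < 2 ^ n - 1 - (r - 2 ^ n) ∧ 2 ^ n - 1 - (r - 2 ^ n) < 2 ^ n - 1 - q := by
            omega
          have := h4 _ hmem.1 hmem.2
          omega
        · rw [gB (show 2 ^ n - 1 - m < 2 ^ n from by omega),
            gB (show 2 ^ n - 1 - p' < 2 ^ n from by omega),
            gB (show q < 2 ^ n from by omega),
            show (2:ℕ) ^ n - 1 - (2 ^ n - 1 - m) = m from by omega,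
            show (2:ℕ) ^ n - 1 - (2 ^ n - 1 - p') = p' from by omega,
            h5, or_comm' (g n p') (g n (2 ^ n - 1 - q)),
            or_append _ _ (by rw [g_length (by omega), g_length (by omega)])]
          simp
        · rw [gB (show 2 ^ n - 1 - m < 2 ^ n from by omega), wt_append_true,
            show (2:ℕ) ^ n - 1 - (2 ^ n - 1 - m) = m from by omega]
          omega
    · -- DownP (n+1) k
      intro p hp1' hplt hwp hwp1
      rcases lt_trichotomy p (2 ^ n) with hA | hA | hA
      · -- first half
        rw [gA hA, wt_append_false] at hwp
        rw [gA (by omega), wt_append_false] at hwp1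
        obtain ⟨p', m, h1, h2, h3, h4, h5, h6⟩ := (ih k hk).2 p hp1' hA hwp hwp1
        refine ⟨p', m, h1, h2, ?_, ?_, ?_, ?_⟩
        · rw [gA (by omega), wt_append_false]; exact h3
        · intro r hr1 hr2
          rw [gA (by omega), wt_append_false]; exact h4 r hr1 hr2
        · rw [gA (by omega), gA (by omega), gA (by omega), h5,
            or_append _ _ (by rw [g_length (by omega), g_length (by omega)])]
          simp
        · rw [gA (by omega), wt_append_false]; exact h6
      · -- p = 2^n : impossible
        exfalso
        subst hA
        rw [show (2:ℕ) ^ n = 2 ^ n + 0 from by omega, gB (by omega), wt_append_true] at hwp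
        simp only [Nat.sub_zero] at hwp
        rw [gA (by omega), wt_append_false] at hwp1
        omega
      · -- second half
        obtain ⟨q, rfl⟩ : ∃ q, p = 2 ^ n + q := ⟨p - 2 ^ n, by omega⟩
        have hq1 : 1 ≤ q := by omega
        have hq2 : q < 2 ^ n := by omega
        rw [gB hq2, wt_append_true] at hwp
        rw [show (2:ℕ) ^ n + q - 1 = 2 ^ n + (q - 1) from by omega,
          gB (show q - 1 < 2 ^ n from by omega), wt_append_true,
          show (2:ℕ) ^ n - 1 - (q - 1) = 2 ^ n - 1 - q + 1 from by omega] at hwp1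
        rcases Nat.lt_or_ge k 2 with hklt | hk2
        · -- k = 1 : explicit top case
          have hk1 : k = 1 := by omega
          subst hk1
          have hp₀0 : 2 ^ n - 1 - q = 0 := wt_eq_zero (n := n) (by omega) (by omega)
          have hn : 1 ≤ n := by
            by_contra h
            have hn0 : n = 0 := by omega
            subst hn0
            omega
          have h2n : 2 ≤ 2 ^ n := Nat.one_lt_two_pow_iff.mpr (by omega)
          have hqval : q = 2 ^ n - 1 := by omega
          obtain ⟨b1, b2, b3, b4, b5⟩ := boundary hn
          refine ⟨2 ^ n - 1, 2 ^ n, show 2 ^ n - 1 < 2 ^ n from by omega,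
            show (2:ℕ) ^ n < 2 ^ n + q from by omega, b1, ?_, ?_, b3⟩
          · intro r hr1 hr2
            refine b5 r hr1 (by omega)
          · rw [show (2:ℕ) ^ n + q = 2 ^ (n + 1) - 1 from by omega]
            exact b4
        · -- k ≥ 2 : use Up(n, k-1)
          obtain ⟨j, m, h1, h2, h3, h4, h5, h6, h7⟩ :=
            (ih (k - 1) (by omega)).1 (2 ^ n - 1 - q) (by omega) (by omega) (by omega)
          refine ⟨2 ^ n + (2 ^ n - 1 - j), 2 ^ n + (2 ^ n - 1 - m), by omega, by omega,
            ?_, ?_, ?_, ?_⟩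
          · rw [gB (show 2 ^ n - 1 - j < 2 ^ n from by omega), wt_append_true,
              show (2:ℕ) ^ n - 1 - (2 ^ n - 1 - j) = j from by omega]
            omega
          · intro r hr1 hr2
            rw [show r = 2 ^ n + (r - 2 ^ n) from by omega,
              gB (show r - 2 ^ n < 2 ^ n from by omega), wt_append_true]
            have hmem : 2 ^ n - 1 - q < 2 ^ n - 1 - (r - 2 ^ n) ∧
                2 ^ n - 1 - (r - 2 ^ n) < j := by omega
            have := h5 _ hmem.1 hmem.2
            omega
          · rw [gB (show 2 ^ n - 1 - m < 2 ^ n from by omega),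
              gB (show 2 ^ n - 1 - j < 2 ^ n from by omega),
              gB (show q < 2 ^ n from by omega),
              show (2:ℕ) ^ n - 1 - (2 ^ n - 1 - m) = m from by omega,
              show (2:ℕ) ^ n - 1 - (2 ^ n - 1 - j) = j from by omega,
              h6, or_comm' (g n (2 ^ n - 1 - q)) (g n j),
              or_append _ _ (by rw [g_length h3, g_length (by omega)])]
            simp
          · rw [gB (show 2 ^ n - 1 - m < 2 ^ n from by omega), wt_append_true,
              show (2:ℕ) ^ n - 1 - (2 ^ n - 1 - m) = m from by omega]
            omega


lemma filter_eq_map_idx {α} (d : α) (P : α → Bool) :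
    ∀ L : List α, L.filter P =
      ((List.range L.length).filter (fun i => P (L.getD i d))).map (fun i => L.getD i d)
  | [] => rfl
  | a :: L => by
    have ih := filter_eq_map_idx d P L
    rw [List.length_cons, List.range_succ_eq_map]
    have hcomp : (fun i => P ((a :: L).getD i d)) ∘ Nat.succ = fun i => P (L.getD i d) := by
      funext i
      simp only [Function.comp_apply, List.getD_cons_succ]
    have hcomp2 : ((fun i => (a :: L).getD i d) ∘ Nat.succ) = fun i => L.getD i d := by
      funext i
      simp only [Function.comp_apply, List.getD_cons_succ]
    by_cases h : P a
    · rw [List.filter_cons_of_pos h, List.filter_cons_of_pos (by simpa using h),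
        List.map_cons, List.getD_cons_zero, List.filter_map, List.map_map, hcomp, hcomp2, ih]
    · rw [List.filter_cons_of_neg h, List.filter_cons_of_neg (by simpa using h),
        List.filter_map, List.map_map, hcomp, hcomp2, ih]

/-- the list of gray-code indices of the level-`k` vertices -/
def pidx (n k : ℕ) : List ℕ :=
  (List.range (gray n).length).filter
    (fun i => decide (((gray n).getD i []).count true = k))

lemma grayLevel_eq (n k : ℕ) :
    grayLevel n k = (pidx n k).map (fun i => (gray n).getD i []) :=
  filter_eq_map_idx [] _ (gray n)

lemma pidx_sorted (n k : ℕ) : (pidx n k).Pairwise (· < ·) :=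
  (List.pairwise_lt_range).filter _

lemma mem_pidx {n k i : ℕ} :
    i ∈ pidx n k ↔ i < (gray n).length ∧ wt (g n i) = k := by
  simp [pidx, List.mem_filter, List.mem_range, wt, g]

lemma wt_def (x : List Bool) : wt x = x.count true := rfl

lemma g_eq_get {n i : ℕ} (h : i < (gray n).length) : g n i = (gray n).get ⟨i, h⟩ := by
  rw [g, List.getD_eq_getElem _ _ h, List.get_eq_getElem]

lemma sorted_sublist {l₁ l₂ : List ℕ} (h₁ : l₁.Pairwise (· < ·)) (h₂ : l₂.Pairwise (· < ·))
    (hsub : l₁ ⊆ l₂) : l₁.Sublist l₂ := by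
  haveI : IsAntisymm ℕ (· < ·) := ⟨fun a b h1 h2 => absurd h2 (not_lt.mpr h1.le)⟩
  exact List.sublist_of_subperm_of_pairwise (List.subperm_of_subset h₁.nodup hsub) h₁ h₂

lemma pidx_getD_lt {n k : ℕ} {a b : ℕ} (hab : a < b) (hb : b < (pidx n k).length) :
    (pidx n k).getD a 0 < (pidx n k).getD b 0 := by
  rw [List.getD_eq_getElem _ _ (by omega), List.getD_eq_getElem _ _ hb]
  exact List.pairwise_iff_getElem.mp (pidx_sorted n k) a b (by omega) hb hab

lemma key (n k : ℕ) (hk : 1 ≤ k) (a : ℕ) (ha : a < (pidx n k).length)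
    (hup : IsUpward n (g n ((pidx n k).getD a 0))) :
    a + 1 < (pidx n k).length ∧
    ∃ m, (pidx n k).getD a 0 < m ∧ m < (pidx n k).getD (a + 1) 0 ∧
      m < (gray n).length ∧ wt (g n m) = k + 1 ∧
      g n m = List.zipWith (· || ·) (g n ((pidx n k).getD a 0))
        (g n ((pidx n k).getD (a + 1) 0)) := by
  have hglen : (gray n).length = 2 ^ n := gray_length n
  set i := (pidx n k).getD a 0 with hidef
  have hmem : i ∈ pidx n k := by
    rw [hidef, List.getD_eq_getElem _ _ ha]
    exact List.getElem_mem _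
  obtain ⟨hilt, hwi⟩ := mem_pidx.mp hmem
  -- unpack IsUpward
  obtain ⟨p, hp1, hp2⟩ := hup
  have hpi : (p : ℕ) = i := by
    rw [g_eq_get hilt] at hp1
    rw [List.get_eq_getElem, List.get_eq_getElem] at hp1
    exact ((gray_nodup n).getElem_inj_iff).mp hp1
  have hi1lt : i + 1 < (gray n).length := by
    by_contra hcon
    have hieq : i + 1 = (gray n).length := by omega
    have hmod : ((p : ℕ) + 1) % (gray n).length = 0 := by rw [hpi, hieq]; simp
    have hfin : (⟨((p : ℕ) + 1) % (gray n).length, Nat.mod_lt _ p.pos⟩ :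
        Fin (gray n).length) = ⟨0, by omega⟩ := Fin.ext hmod
    rw [hfin, ← g_eq_get (by omega), g_zero] at hp2
    rw [wt_def] at hwi
    simp [List.count_replicate] at hp2
  have hsucc : wt (g n (i + 1)) = k + 1 := by
    have hmod : ((p : ℕ) + 1) % (gray n).length = i + 1 := by
      rw [hpi, Nat.mod_eq_of_lt hi1lt]
    have hfin : (⟨((p : ℕ) + 1) % (gray n).length, Nat.mod_lt _ p.pos⟩ :
        Fin (gray n).length) = ⟨i + 1, hi1lt⟩ := Fin.ext hmod
    rw [hfin, ← g_eq_get hi1lt] at hp2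
    rw [wt_def, hp2, ← wt_def, hwi]
  -- apply the master lemma
  obtain ⟨j, m, h1, h2, h3, h4, h5, h6, h7⟩ :=
    ((updown n k hk).1) i (by omega) hwi hsucc
  -- j is the next element of pidx
  have hjmem : j ∈ pidx n k := mem_pidx.mpr ⟨by omega, h4⟩
  have hblt : (pidx n k).idxOf j < (pidx n k).length := List.idxOf_lt_length_iff.mpr hjmem
  have hbval : (pidx n k).getD ((pidx n k).idxOf j) 0 = j := by
    rw [List.getD_eq_getElem _ _ hblt]
    exact List.getElem_idxOf hblt
  have hab : a < (pidx n k).idxOf j := by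
    by_contra hcon
    have hle : (pidx n k).idxOf j ≤ a := by omega
    rcases lt_or_eq_of_le hle with hlt | heq
    · have := pidx_getD_lt (n := n) (k := k) hlt ha
      omega
    · rw [heq] at hbval
      omega
  have hb : (pidx n k).idxOf j = a + 1 := by
    by_contra hcon
    have ha1b : a + 1 < (pidx n k).idxOf j := by omega
    have hv1 : (pidx n k).getD (a + 1) 0 < j := by
      have := pidx_getD_lt (n := n) (k := k) ha1b hblt
      omega
    have hv2 : i < (pidx n k).getD (a + 1) 0 := by
      have := pidx_getD_lt (n := n) (k := k) (show a < a + 1 by omega) (by omega)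
      omega
    have hvmem : (pidx n k).getD (a + 1) 0 ∈ pidx n k := by
      rw [List.getD_eq_getElem _ _ (show a + 1 < (pidx n k).length by omega)]
      exact List.getElem_mem _
    obtain ⟨_, hwv⟩ := mem_pidx.mp hvmem
    exact h5 _ hv2 hv1 hwv
  have ha1 : a + 1 < (pidx n k).length := by omega
  refine ⟨ha1, m, h1, ?_, by omega, h7, ?_⟩
  · rw [← hb, hbval]; exact h2
  · rw [← hb, hbval]; exact h6

lemma filterMap_if {α β : Type*} (p : α → Prop) [DecidablePred p] (G : α → β) (l : List α) :
    l.filterMap (fun a => if p a then some (G a) else none)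
      = (l.filter (fun a => decide (p a))).map G := by
  induction l with
  | nil => rfl
  | cons a l ih =>
    rw [List.filterMap_cons, List.filter_cons]
    by_cases h : p a <;> simp [h, ih]

lemma upSeq_eq (n k : ℕ) :
    upSeq n k = ((List.range (grayLevel n k).length).filter
        (fun a => decide (IsUpward n ((grayLevel n k).getD a [])))).map
      (fun a => List.zipWith (· || ·) ((grayLevel n k).getD a [])
        ((grayLevel n k).getD ((a + 1) % (grayLevel n k).length) [])) := by
  rw [upSeq, ← (show ∀ m, (List.finRange m).map Fin.val = List.range m from fun m => List.ext_getElem (by simp) (by simp)), ← filterMap_if, List.filterMap_map]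
  congr 1
  funext a
  have e1 : (grayLevel n k).get a = (grayLevel n k).getD (a : ℕ) [] := by
    rw [List.get_eq_getElem, List.getD_eq_getElem _ _ a.isLt]
  have e2 : (grayLevel n k).get ⟨((a : ℕ) + 1) % (grayLevel n k).length,
      Nat.mod_lt _ a.pos⟩ = (grayLevel n k).getD (((a : ℕ) + 1) % (grayLevel n k).length) [] := by
    rw [List.get_eq_getElem, List.getD_eq_getElem _ _ (Nat.mod_lt _ a.pos)]
  simp only [Function.comp_apply, e1, e2]

lemma gl_getD {n k a : ℕ} (ha : a < (pidx n k).length) :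
    (grayLevel n k).getD a [] = g n ((pidx n k).getD a 0) := by
  rw [grayLevel_eq, List.getD_eq_getElem _ _ (by simpa using ha),
    List.getElem_map, g, List.getD_eq_getElem _ _ ha]

theorem stmt10' (n k : ℕ) (hk0 : 0 < k) :
    (upSeq n k).Sublist (grayLevel n (k + 1)) ∧ (upSeq n k).Nodup := by
  have hk : 1 ≤ k := hk0
  have hFlen : (grayLevel n k).length = (pidx n k).length := by
    rw [grayLevel_eq]; simp
  set A := (List.range (grayLevel n k).length).filter
    (fun a => decide (IsUpward n ((grayLevel n k).getD a []))) with hA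
  have hmemA : ∀ a ∈ A, a < (pidx n k).length ∧ IsUpward n (g n ((pidx n k).getD a 0)) := by
    intro a haA
    rw [hA, List.mem_filter, List.mem_range] at haA
    obtain ⟨h1, h2⟩ := haA
    refine ⟨by omega, ?_⟩
    rw [← gl_getD (by omega)]
    exact of_decide_eq_true h2
  set M : ℕ → ℕ := fun a => @List.idxOf (List Bool) instBEqOfDecidableEq
    (List.zipWith (· || ·) ((grayLevel n k).getD a [])
      ((grayLevel n k).getD ((a + 1) % (grayLevel n k).length) [])) (gray n) with hM
  have hkey : ∀ a ∈ A, ∃ m, M a = m ∧ (pidx n k).getD a 0 < m ∧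
      (a + 1 < (pidx n k).length ∧ m < (pidx n k).getD (a + 1) 0) ∧
      m ∈ pidx n (k + 1) ∧
      (List.zipWith (· || ·) ((grayLevel n k).getD a [])
        ((grayLevel n k).getD ((a + 1) % (grayLevel n k).length) []) = g n m) := by
    intro a haA
    obtain ⟨ha, hup⟩ := hmemA a haA
    obtain ⟨ha1, m, hm1, hm2, hm3, hm4, hm5⟩ := key n k hk a ha hup
    have hmodeq : (a + 1) % (grayLevel n k).length = a + 1 :=
      Nat.mod_eq_of_lt (by omega)
    have hval : List.zipWith (· || ·) ((grayLevel n k).getD a [])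
        ((grayLevel n k).getD ((a + 1) % (grayLevel n k).length) []) = g n m := by
      rw [hmodeq, gl_getD (by omega), gl_getD ha1, hm5]
    refine ⟨m, ?_, hm1, ⟨ha1, hm2⟩, mem_pidx.mpr ⟨hm3, hm4⟩, hval⟩
    rw [hM]
    simp only
    rw [hval, g, List.getD_eq_getElem _ _ hm3]
    exact @List.Nodup.idxOf_getElem _ instBEqOfDecidableEq _ _ (gray_nodup n) m hm3
  have hAsorted : A.Pairwise (· < ·) := (List.pairwise_lt_range).filter _
  have hpairM : (A.map M).Pairwise (· < ·) := by
    rw [List.pairwise_map]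
    refine hAsorted.imp_of_mem ?_
    intro a b haA hbA hab
    obtain ⟨ma, hma0, hma1, ⟨ha1, hma2⟩, _, _⟩ := hkey a haA
    obtain ⟨mb, hmb0, hmb1, _, _, _⟩ := hkey b hbA
    obtain ⟨hblt, _⟩ := hmemA b hbA
    have hle : (pidx n k).getD (a + 1) 0 ≤ (pidx n k).getD b 0 := by
      rcases lt_or_eq_of_le (show a + 1 ≤ b by omega) with hlt | heq
      · exact (pidx_getD_lt (n := n) (k := k) hlt hblt).le
      · rw [heq]
    omega
  have hsubset : (A.map M) ⊆ pidx n (k + 1) := by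
    intro x hx
    obtain ⟨a, haA, rfl⟩ := List.mem_map.mp hx
    obtain ⟨m, hm0, _, _, hmem, _⟩ := hkey a haA
    rw [hm0]
    exact hmem
  have hsub2 : (A.map M).Sublist (pidx n (k + 1)) :=
    sorted_sublist hpairM (pidx_sorted n (k + 1)) hsubset
  have hfinal : upSeq n k = (A.map M).map (fun i => (gray n).getD i []) := by
    rw [upSeq_eq, ← hA, List.map_map]
    refine (List.map_congr_left ?_).symm
    intro a haA
    obtain ⟨m, hm0, _, _, _, hval⟩ := hkey a haA
    simp only [Function.comp_apply, hm0]
    rw [hval]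
    rfl
  have hsub : (upSeq n k).Sublist (grayLevel n (k + 1)) := by
    rw [hfinal, grayLevel_eq n (k + 1)]
    exact hsub2.map _
  have hnd : (grayLevel n (k + 1)).Nodup := (gray_nodup n).filter _
  exact ⟨hsub, hnd.sublist hsub⟩


/-- For `n ≥ 2` and `0 < k < n`, the sequence `up(Γ_{n,k})` is a subsequence of
`Γ_{n,k+1}`; in particular all its vertices are distinct. -/
theorem stmt10 (n k : ℕ) (hn : 2 ≤ n) (hk0 : 0 < k) (hkn : k < n) :
    (upSeq n k).Sublist (grayLevel n (k + 1)) ∧ (upSeq n k).Nodup := by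
  exact stmt10' n k hk0
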